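/- Let S and O be finite nonempty sets and let M₁ = (r,p₁) and M₂ = (r,p₂) be SMDP models over (S,O) sharing the same reward function r with 0 ≤ r(s,o) ≤ Rmax, with ∑_{s'} p₁(s,o,s') ≤ γ̄ and ∑_{s'} p₂(s,o,s') ≤ γ̄ for all (s,o) where γ̄ < 1, and with max_{s,o} ∑_{s'} |p₁(s,o,s') − p₂(s,o,s')| ≤ γ̄ · ζ. Let Q₁ and Q₂ be Bellman-optimal value functions for M₁ and M₂. Then ‖Q₁ − Q₂‖_∞ ≤ ζ · γ̄ · Rmax / (1 − γ̄)². -/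

import Mathlib

/-- Maximum of a real-valued function over a finite nonempty type. -/
noncomputable def fmax {α : Type*} [Fintype α] [Nonempty α] (f : α → ℝ) : ℝ :=
  Finset.univ.sup' Finset.univ_nonempty f

lemma le_fmax {α : Type*} [Fintype α] [Nonempty α] (f : α → ℝ) (a : α) : f a ≤ fmax f :=
  Finset.le_sup' f (Finset.mem_univ a)

lemma fmax_le {α : Type*} [Fintype α] [Nonempty α] (f : α → ℝ) {b : ℝ}
    (h : ∀ a, f a ≤ b) : fmax f ≤ b :=
  Finset.sup'_le _ _ (fun a _ => h a)

lemma abs_fmax_le {α : Type*} [Fintype α] [Nonempty α] (f : α → ℝ) :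
    |fmax f| ≤ fmax (fun a => |f a|) := by
  rw [abs_le]
  constructor
  · obtain ⟨a⟩ := ‹Nonempty α›
    have h1 : -|f a| ≤ f a := neg_abs_le _
    have h2 := le_fmax f a
    have h3 := le_fmax (fun a => |f a|) a
    linarith
  · exact fmax_le _ (fun a => (le_abs_self _).trans (le_fmax (fun a => |f a|) a))

lemma abs_fmax_sub_fmax {α : Type*} [Fintype α] [Nonempty α] (f g : α → ℝ) :
    |fmax f - fmax g| ≤ fmax (fun a => |f a - g a|) := by
  rw [abs_sub_le_iff]
  constructor
  · rw [sub_le_iff_le_add]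
    refine fmax_le _ (fun a => ?_)
    have h1 : f a - g a ≤ |f a - g a| := le_abs_self _
    have h2 := le_fmax (fun a => |f a - g a|) a
    have h3 := le_fmax g a
    linarith
  · rw [sub_le_iff_le_add]
    refine fmax_le _ (fun a => ?_)
    have h1 : g a - f a ≤ |f a - g a| := by rw [abs_sub_comm]; exact le_abs_self _
    have h2 := le_fmax (fun a => |f a - g a|) a
    have h3 := le_fmax f a
    linarith

/-- Term (C) in the proof of Theorem 3: when the intent-induced SMDP's transition model
is within total variation `γ̄·ζ` of the true one and rewards coincide, the optimal option
value functions differ by at most `ζ γ̄ Rmax / (1 - γ̄)²`. -/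
theorem intent_optimal_value_gap {S O : Type*} [Fintype S] [Fintype O] [Nonempty S] [Nonempty O]
    (r : S → O → ℝ) (p₁ p₂ : S → O → S → ℝ) (Rmax γbar ζ : ℝ)
    (hr0 : ∀ s o, 0 ≤ r s o) (hrR : ∀ s o, r s o ≤ Rmax)
    (hp₁ : ∀ s o s', 0 ≤ p₁ s o s') (hp₂ : ∀ s o s', 0 ≤ p₂ s o s')
    (hγ₁ : ∀ s o, ∑ s' : S, p₁ s o s' ≤ γbar)
    (hγ₂ : ∀ s o, ∑ s' : S, p₂ s o s' ≤ γbar)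
    (hγlt : γbar < 1)
    (hζ : fmax (fun so : S × O => ∑ s' : S, |p₁ so.1 so.2 s' - p₂ so.1 so.2 s'|) ≤ γbar * ζ)
    (Q₁ Q₂ : S → O → ℝ)
    (hQ₁ : ∀ s o, Q₁ s o = r s o + ∑ s' : S, p₁ s o s' * fmax (fun o' => Q₁ s' o'))
    (hQ₂ : ∀ s o, Q₂ s o = r s o + ∑ s' : S, p₂ s o s' * fmax (fun o' => Q₂ s' o')) :
    fmax (fun so : S × O => |Q₁ so.1 so.2 - Q₂ so.1 so.2|) ≤
      ζ * γbar * Rmax / (1 - γbar) ^ 2 := by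
  set M := fmax (fun so : S × O => |Q₁ so.1 so.2 - Q₂ so.1 so.2|) with hM
  set N := fmax (fun so : S × O => |Q₂ so.1 so.2|) with hN
  obtain ⟨s₀⟩ := ‹Nonempty S›
  obtain ⟨o₀⟩ := ‹Nonempty O›
  have hγ0 : 0 ≤ γbar :=
    le_trans (Finset.sum_nonneg fun s' _ => hp₁ s₀ o₀ s') (hγ₁ s₀ o₀)
  have hN0 : 0 ≤ N := le_trans (abs_nonneg _) (le_fmax (fun so : S × O => |Q₂ so.1 so.2|) (s₀, o₀))
  have hM0 : 0 ≤ M := le_trans (abs_nonneg _) (le_fmax (fun so : S × O => |Q₁ so.1 so.2 - Q₂ so.1 so.2|) (s₀, o₀))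
  have hγζ0 : 0 ≤ γbar * ζ :=
    le_trans (le_trans (Finset.sum_nonneg fun s' _ => abs_nonneg _)
      (le_fmax (fun so : S × O => ∑ s' : S, |p₁ so.1 so.2 s' - p₂ so.1 so.2 s'|) (s₀, o₀))) hζ
  have hRmax0 : 0 ≤ Rmax := le_trans (hr0 s₀ o₀) (hrR s₀ o₀)
  have h1γ : 0 < 1 - γbar := by linarith
  -- |V₂ s'| ≤ N and |V₁ - V₂| ≤ M pointwise
  have hV₂ : ∀ s' : S, |fmax (fun o' => Q₂ s' o')| ≤ N := fun s' =>
    (abs_fmax_le _).trans (fmax_le _ fun o' => le_fmax (fun so : S × O => |Q₂ so.1 so.2|) (s', o'))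
  have hVd : ∀ s' : S,
      |fmax (fun o' => Q₁ s' o') - fmax (fun o' => Q₂ s' o')| ≤ M := fun s' =>
    (abs_fmax_sub_fmax _ _).trans
      (fmax_le _ fun o' => le_fmax (fun so : S × O => |Q₁ so.1 so.2 - Q₂ so.1 so.2|) (s', o'))
  -- bound N ≤ Rmax / (1 - γbar)
  have hNbound : N ≤ Rmax / (1 - γbar) := by
    have key : N ≤ Rmax + γbar * N := by
      refine fmax_le _ fun so => ?_
      obtain ⟨s, o⟩ := so
      rw [hQ₂ s o]
      calc |r s o + ∑ s' : S, p₂ s o s' * fmax (fun o' => Q₂ s' o')|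
          ≤ |r s o| + |∑ s' : S, p₂ s o s' * fmax (fun o' => Q₂ s' o')| := abs_add_le _ _
        _ ≤ Rmax + ∑ s' : S, p₂ s o s' * N := by
            gcongr
            · rw [abs_of_nonneg (hr0 s o)]; exact hrR s o
            · refine (Finset.abs_sum_le_sum_abs _ _).trans (Finset.sum_le_sum fun s' _ => ?_)
              rw [abs_mul, abs_of_nonneg (hp₂ s o s')]
              exact mul_le_mul_of_nonneg_left (hV₂ s') (hp₂ s o s')
        _ ≤ Rmax + γbar * N := by
            rw [← Finset.sum_mul]
            exact add_le_add le_rfl (mul_le_mul_of_nonneg_right (hγ₂ s o) hN0)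
    rw [le_div_iff₀ h1γ]
    linarith
  -- main contraction step
  have key : M ≤ γbar * M + (γbar * ζ) * N := by
    refine fmax_le _ fun so => ?_
    obtain ⟨s, o⟩ := so
    have hdecomp : Q₁ s o - Q₂ s o =
        (∑ s' : S, p₁ s o s' * (fmax (fun o' => Q₁ s' o') - fmax (fun o' => Q₂ s' o'))) +
        ∑ s' : S, (p₁ s o s' - p₂ s o s') * fmax (fun o' => Q₂ s' o') := by
      rw [hQ₁ s o, hQ₂ s o, ← Finset.sum_add_distrib, add_sub_add_left_eq_sub,
        ← Finset.sum_sub_distrib]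
      exact Finset.sum_congr rfl fun s' _ => by ring
    calc |Q₁ s o - Q₂ s o|
        ≤ (∑ s' : S, p₁ s o s' * M) +
          ∑ s' : S, |p₁ s o s' - p₂ s o s'| * N := by
          rw [hdecomp]
          refine (abs_add_le _ _).trans (add_le_add ?_ ?_)
          · refine (Finset.abs_sum_le_sum_abs _ _).trans (Finset.sum_le_sum fun s' _ => ?_)
            rw [abs_mul, abs_of_nonneg (hp₁ s o s')]
            exact mul_le_mul_of_nonneg_left (hVd s') (hp₁ s o s')
          · refine (Finset.abs_sum_le_sum_abs _ _).trans (Finset.sum_le_sum fun s' _ => ?_)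
            rw [abs_mul]
            exact mul_le_mul_of_nonneg_left (hV₂ s') (abs_nonneg _)
      _ ≤ γbar * M + (γbar * ζ) * N := by
          rw [← Finset.sum_mul, ← Finset.sum_mul]
          refine add_le_add (mul_le_mul_of_nonneg_right (hγ₁ s o) hM0)
            (mul_le_mul_of_nonneg_right ?_ hN0)
          exact le_trans (le_fmax (fun so : S × O => ∑ s' : S, |p₁ so.1 so.2 s' - p₂ so.1 so.2 s'|)
            (s, o)) hζ
  have hMle : M ≤ (γbar * ζ) * (Rmax / (1 - γbar)) / (1 - γbar) := by
    rw [le_div_iff₀ h1γ]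
    have := mul_le_mul_of_nonneg_left hNbound hγζ0
    linarith
  calc M ≤ (γbar * ζ) * (Rmax / (1 - γbar)) / (1 - γbar) := hMle
    _ = ζ * γbar * Rmax / (1 - γbar) ^ 2 := by field_simp
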